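/- Let H be the one-dimensional Dirac operator and let R_H^±(λ) = lim_{ε↓0} R_H(λ ± iε) be the boundary values of the resolvent on the continuous spectrum, defined for λ ∈ (−∞,−1) ∪ (1,∞) as bounded operators from L¹(ℝ, ℂ²) to L^∞(ℝ, ℂ²). Then for any λ₀ > 1 there exists C(λ₀) > 0 such that sup_{|λ| ≥ λ₀} ‖R_H^±(λ)‖_{L¹ → L^∞} ≤ C(λ₀). -/

import Mathlib

open MeasureTheory Complex Set
open scoped Real ENNReal

noncomputable section

/-- The action of the integral operator with the Green's function kernel
`(1/(2κ)) [[λ + iκ·sign(x−y), −1],[−1, −λ − iκ·sign(x−y)]] e^{−κ|x−y|}`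
of the resolvent of the one-dimensional Dirac operator. -/
def diracResolvent (lam kap : ℂ) (f : ℝ → ℂ × ℂ) (x : ℝ) : ℂ × ℂ :=
  ((2 * kap)⁻¹ * ∫ y : ℝ,
      (((lam + Complex.I * kap * (Real.sign (x - y) : ℂ)) * (f y).1 - (f y).2) *
        Complex.exp (-kap * (|x - y| : ℝ))),
   (2 * kap)⁻¹ * ∫ y : ℝ,
      ((-(f y).1 + (-lam - Complex.I * kap * (Real.sign (x - y) : ℂ)) * (f y).2) *
        Complex.exp (-kap * (|x - y| : ℝ))))

/-- The spectrum `(−∞,−1] ∪ [1,∞)` of the one-dimensional Dirac operator,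
as a subset of `ℂ`. -/
def diracSpectrum : Set ℂ := {z : ℂ | z.im = 0 ∧ 1 ≤ |z.re|}

/-- The boundary values `R_H^±(λ)` of the resolvent on the continuous spectrum
(real `λ` with `|λ| > 1`, purely imaginary `κ` with `κ² + λ² = 1`) are bounded from
`L¹(ℝ,ℂ²)` to `L^∞(ℝ,ℂ²)`, uniformly for `|λ| ≥ λ₀ > 1`. -/
theorem dirac_resolvent_boundary_uniform_bound :
    ∀ lam₀ : ℝ, 1 < lam₀ →
      ∃ C : ℝ, 0 < C ∧
        ∀ lam : ℝ, lam₀ ≤ |lam| →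
          ∀ kap : ℂ, kap ^ 2 + (lam : ℂ) ^ 2 = 1 → kap.re = 0 →
            ∀ f : ℝ → ℂ × ℂ, Integrable f volume →
              ∀ x : ℝ, ‖diracResolvent (lam : ℂ) kap f x‖ ≤ C * ∫ y : ℝ, ‖f y‖ := by
  intro lam0 hlam0
  set s := Real.sqrt (lam0 ^ 2 - 1) with hsdef
  have hs : 0 < s := Real.sqrt_pos.mpr (by nlinarith)
  refine ⟨1 + 1 / s, by positivity, ?_⟩
  intro lam hlam kap hk hre f hf x
  have hlam1 : 1 < |lam| := lt_of_lt_of_le hlam0 hlam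
  -- |kap|^2 = lam^2 - 1
  have him : kap.im ^ 2 = lam ^ 2 - 1 := by
    have h := congrArg Complex.re hk
    simp [pow_two, Complex.mul_re, Complex.add_re, hre, Complex.ofReal_re,
      Complex.ofReal_im] at h
    nlinarith [h]
  set k := ‖kap‖ with hkdef
  have hk2 : k ^ 2 = lam ^ 2 - 1 := by
    have h1 : k ^ 2 = kap.re ^ 2 + kap.im ^ 2 := by
      rw [hkdef]
      rw [Complex.sq_norm, Complex.normSq_apply]
      ring
    rw [h1, hre, him]; ring
  have hss : s ^ 2 = lam0 ^ 2 - 1 := Real.sq_sqrt (by nlinarith)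
  have hks : s ≤ k := by
    have h1 : s ^ 2 ≤ k ^ 2 := by
      rw [hss, hk2]
      have : lam0 ^ 2 ≤ lam ^ 2 := by
        rw [← _root_.sq_abs lam]
        nlinarith [hlam, hlam0]
      linarith
    nlinarith [norm_nonneg kap, Real.sqrt_nonneg (lam0 ^ 2 - 1)]
  have hkpos : 0 < k := lt_of_lt_of_le hs hks
  have hlamk : |lam| ≤ k + 1 := by
    nlinarith [_root_.sq_abs lam, abs_nonneg lam]
  set M := |lam| + k + 1 with hMdef
  set N := ∫ y : ℝ, ‖f y‖ with hNdef
  have hN : 0 ≤ N := integral_nonneg fun y => norm_nonneg _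
  -- norm of the exponential factor is 1
  have hexp : ∀ r : ℝ, ‖Complex.exp (-kap * (r : ℂ))‖ = 1 := by
    intro r
    rw [Complex.norm_exp]
    simp [Complex.mul_re, hre]
  have hsign : ∀ u : ℝ, |Real.sign u| ≤ 1 := by
    intro u
    rcases lt_trichotomy u 0 with h | h | h
    · simp [Real.sign_of_neg h]
    · simp [h]
    · simp [Real.sign_of_pos h]
  have hcoef : ∀ u : ℝ, ‖(lam : ℂ) + Complex.I * kap * (Real.sign u : ℂ)‖ ≤ |lam| + k := by
    intro u
    calc ‖(lam : ℂ) + Complex.I * kap * (Real.sign u : ℂ)‖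
        ≤ ‖(lam : ℂ)‖ + ‖Complex.I * kap * (Real.sign u : ℂ)‖ := norm_add_le _ _
      _ = |lam| + k * |Real.sign u| := by
          rw [norm_mul, norm_mul, Complex.norm_I, one_mul, Complex.norm_real,
            Real.norm_eq_abs, Complex.norm_real, Real.norm_eq_abs]
      _ ≤ |lam| + k := by nlinarith [hsign u, hkpos]
  -- bounds on the two integrals
  have hint1 : ‖∫ y : ℝ,
      (((lam : ℂ) + Complex.I * kap * (Real.sign (x - y) : ℂ)) * (f y).1 - (f y).2) *
        Complex.exp (-kap * (|x - y| : ℝ))‖ ≤ M * N := by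
    have hgi : Integrable (fun y : ℝ => M * ‖f y‖) volume := hf.norm.const_mul M
    have hpt : ∀ y : ℝ, ‖(((lam : ℂ) + Complex.I * kap * (Real.sign (x - y) : ℂ)) * (f y).1 - (f y).2) *
        Complex.exp (-kap * (|x - y| : ℝ))‖ ≤ M * ‖f y‖ := by
      intro y
      rw [norm_mul, hexp, mul_one]
      calc ‖((lam : ℂ) + Complex.I * kap * (Real.sign (x - y) : ℂ)) * (f y).1 - (f y).2‖
          ≤ ‖((lam : ℂ) + Complex.I * kap * (Real.sign (x - y) : ℂ)) * (f y).1‖ + ‖(f y).2‖ :=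
            norm_sub_le _ _
        _ ≤ (|lam| + k) * ‖f y‖ + ‖f y‖ := by
            rw [norm_mul]
            gcongr
            · exact hcoef (x - y)
            · exact norm_fst_le (f y)
            · exact norm_snd_le (f y)
        _ = M * ‖f y‖ := by rw [hMdef]; ring
    calc _ ≤ ∫ y : ℝ, M * ‖f y‖ := norm_integral_le_of_norm_le hgi (.of_forall hpt)
      _ = M * N := integral_const_mul M _
  have hint2 : ‖∫ y : ℝ,
      (-(f y).1 + (-(lam : ℂ) - Complex.I * kap * (Real.sign (x - y) : ℂ)) * (f y).2) *
        Complex.exp (-kap * (|x - y| : ℝ))‖ ≤ M * N := by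
    have hgi : Integrable (fun y : ℝ => M * ‖f y‖) volume := hf.norm.const_mul M
    have hpt : ∀ y : ℝ, ‖(-(f y).1 + (-(lam : ℂ) - Complex.I * kap * (Real.sign (x - y) : ℂ)) * (f y).2) *
        Complex.exp (-kap * (|x - y| : ℝ))‖ ≤ M * ‖f y‖ := by
      intro y
      rw [norm_mul, hexp, mul_one]
      have hc : ‖-(lam : ℂ) - Complex.I * kap * (Real.sign (x - y) : ℂ)‖ ≤ |lam| + k := by
        have : -(lam : ℂ) - Complex.I * kap * (Real.sign (x - y) : ℂ) =
            -((lam : ℂ) + Complex.I * kap * (Real.sign (x - y) : ℂ)) := by ring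
        rw [this, norm_neg]
        exact hcoef (x - y)
      calc ‖-(f y).1 + (-(lam : ℂ) - Complex.I * kap * (Real.sign (x - y) : ℂ)) * (f y).2‖
          ≤ ‖-(f y).1‖ + ‖(-(lam : ℂ) - Complex.I * kap * (Real.sign (x - y) : ℂ)) * (f y).2‖ :=
            norm_add_le _ _
        _ ≤ ‖f y‖ + (|lam| + k) * ‖f y‖ := by
            rw [norm_neg, norm_mul]
            gcongr
            · exact norm_fst_le (f y)
            · exact norm_snd_le (f y)
        _ = M * ‖f y‖ := by rw [hMdef]; ring
    calc _ ≤ ∫ y : ℝ, M * ‖f y‖ := norm_integral_le_of_norm_le hgi (.of_forall hpt)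
      _ = M * N := integral_const_mul M _
  -- the scalar estimate
  have hCk : (2 * k)⁻¹ * M ≤ 1 + 1 / s := by
    rw [inv_mul_le_iff₀ (by positivity)]
    have h2 : 2 ≤ 2 * k / s := by
      rw [le_div_iff₀ hs]; linarith
    have h3 : 2 * k * (1 + 1 / s) = 2 * k + 2 * k / s := by
      field_simp
    rw [h3, hMdef]
    linarith
  have hnorm_inv : ‖(2 * kap)⁻¹‖ = (2 * k)⁻¹ := by
    have h2 : ‖(2 : ℂ)‖ = 2 := by simp
    rw [norm_inv, norm_mul, h2]
  have key : ∀ I : ℂ, ‖I‖ ≤ M * N → ‖(2 * kap)⁻¹ * I‖ ≤ (1 + 1 / s) * N := by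
    intro I hI
    rw [norm_mul, hnorm_inv]
    calc (2 * k)⁻¹ * ‖I‖ ≤ (2 * k)⁻¹ * (M * N) :=
          mul_le_mul_of_nonneg_left hI (by positivity)
      _ = ((2 * k)⁻¹ * M) * N := by ring
      _ ≤ (1 + 1 / s) * N := by gcongr
  rw [diracResolvent, Prod.norm_def]
  exact max_le (key _ hint1) (key _ hint2)
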